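/- With a_{n,k} = k(2n−k−1)!/((n−k)!·n!) for 1 ≤ k ≤ n, the total sum Σ_{k=1}^{n} a_{n,k} equals the n-th Catalan number (2n)!/(n!·(n+1)!). -/

import Mathlib

lemma fq_ne (m : ℕ) : (Nat.factorial m : ℚ) ≠ 0 := by
  exact_mod_cast Nat.factorial_ne_zero m

lemma fq_succ (m : ℕ) : (Nat.factorial (m + 1) : ℚ)
    = ((m : ℚ) + 1) * (Nat.factorial m : ℚ) := by
  rw [Nat.factorial_succ]; push_cast; ring

lemma key_partial (n : ℕ) : ∀ m : ℕ, m < n →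
    (∑ k ∈ Finset.Icc 1 m, (k : ℚ) * (Nat.factorial (2 * n - k - 1) : ℚ) /
        ((Nat.factorial (n - k) : ℚ) * (Nat.factorial n : ℚ)))
    = (Nat.factorial (2 * n) : ℚ) /
        ((Nat.factorial n : ℚ) * (Nat.factorial (n + 1) : ℚ))
      - ((m : ℚ) + 2) * (Nat.factorial (2 * n - m - 1) : ℚ) /
        ((Nat.factorial (n - m - 1) : ℚ) * (Nat.factorial (n + 1) : ℚ)) := by
  intro m
  induction m with
  | zero =>
    intro hn
    obtain ⟨s, rfl⟩ : ∃ s, n = s + 1 := ⟨n - 1, by omega⟩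
    rw [Finset.Icc_eq_empty (by omega), Finset.sum_empty]
    have e1 : 2 * (s + 1) - 0 - 1 = 2 * s + 1 := by omega
    have e2 : s + 1 - 0 - 1 = s := by omega
    have e3 : 2 * (s + 1) = (2 * s + 1) + 1 := by omega
    rw [e1, e2, e3, fq_succ (2 * s + 1), fq_succ s]
    have h1 := fq_ne (2 * s + 1)
    have h2 := fq_ne s
    have h3 := fq_ne (s + 1 + 1)
    field_simp
    push_cast
    ring
  | succ m ih =>
    intro hm
    obtain ⟨t, rfl⟩ : ∃ t, n = m + 2 + t := ⟨n - m - 2, by omega⟩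
    rw [Finset.sum_Icc_succ_top (by omega : (1:ℕ) ≤ m + 1), ih (by omega)]
    have e1 : 2 * (m + 2 + t) - m - 1 = (m + 2 * t + 2) + 1 := by omega
    have e2 : m + 2 + t - m - 1 = t + 1 := by omega
    have e3 : 2 * (m + 2 + t) - (m + 1) - 1 = m + 2 * t + 2 := by omega
    have e4 : m + 2 + t - (m + 1) = t + 1 := by omega
    have e5 : m + 2 + t - (m + 1) - 1 = t := by omega
    have e6 : m + 2 + t + 1 = (m + 2 + t) + 1 := rfl
    rw [e1, e2, e3, e5, e4, e6, fq_succ (m + 2 * t + 2), fq_succ t,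
      fq_succ (m + 2 + t)]
    have h1 := fq_ne (m + 2 * t + 2)
    have h2 := fq_ne t
    have h3 := fq_ne (m + 2 + t)
    push_cast
    field_simp
    ring

/-- With `a n k = k(2n−k−1)!/((n−k)!·n!)`, the total sum `Σ_{k=1}^n a n k` equals the
`n`-th Catalan number `(2n)!/(n!·(n+1)!)`. -/
theorem sum_ank_eq_catalan :
    ∀ n : ℕ, 1 ≤ n →
      (∑ k ∈ Finset.Icc 1 n, (k : ℚ) * (Nat.factorial (2 * n - k - 1) : ℚ) /
        ((Nat.factorial (n - k) : ℚ) * (Nat.factorial n : ℚ)))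
      = (Nat.factorial (2 * n) : ℚ) /
          ((Nat.factorial n : ℚ) * (Nat.factorial (n + 1) : ℚ)) := by
  intro n hn
  obtain ⟨s, rfl⟩ : ∃ s, n = s + 1 := ⟨n - 1, by omega⟩
  rw [Finset.sum_Icc_succ_top (by omega : (1:ℕ) ≤ s + 1),
    key_partial (s + 1) s (by omega)]
  have e1 : 2 * (s + 1) - s - 1 = s + 1 := by omega
  have e2 : s + 1 - s - 1 = 0 := by omega
  have e3 : 2 * (s + 1) - (s + 1) - 1 = s := by omega
  have e4 : s + 1 - (s + 1) = 0 := by omega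
  rw [e1, e2, e3, e4, fq_succ (s + 1), fq_succ s]
  have h1 := fq_ne s
  have h2 := fq_ne (s + 1)
  simp only [Nat.factorial_zero, Nat.cast_one]
  push_cast
  field_simp
  ring
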